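/- Let n, dv, dm, h be positive natural numbers and A : Fin h → Matrix (Fin n) (Fin dv) ℝ a family of head outputs. Define the concatenation concat A : Matrix (Fin n) (Fin dv × Fin h) ℝ by (concat A) i (j, l) = A l i j. Let τ : Equiv.Perm (Fin dv) with permutation matrix P₂ : Matrix (Fin dv) (Fin dv) ℝ, and let P₃ = Matrix.blockDiagonal (fun _ : Fin h => P₂ᵀ) : Matrix (Fin dv × Fin h) (Fin dv × Fin h) ℝ be the block-diagonal matrix with every diagonal block equal to P₂ᵀ. Then concat (fun l => A l * P₂) * P₃ = concat A, and consequently for every output weight W : Matrix (Fin dv × Fin h) (Fin dm) ℝ, concat (fun l => A l * P₂) * P₃ * W = concat A * W. -/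

import Mathlib

open Matrix

/-- Concatenation of `h` head outputs along the column dimension. -/
def concat {n dv h : ℕ} (A : Fin h → Matrix (Fin n) (Fin dv) ℝ) :
    Matrix (Fin n) (Fin dv × Fin h) ℝ :=
  fun i jl => A jl.2 i jl.1

/-- A permutation matrix times its transpose is the identity. -/
lemma permMatrix_mul_transpose {n : ℕ} (τ : Equiv.Perm (Fin n)) :
    τ.permMatrix ℝ * (τ.permMatrix ℝ)ᵀ = 1 := by
  ext i j
  simp [mul_apply, Equiv.Perm.permMatrix, PEquiv.toMatrix_apply, Equiv.toPEquiv_apply,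
    one_apply, eq_comm, Equiv.eq_symm_apply]

/-- Multiplying a concatenation by a block-diagonal matrix acts headwise. -/
lemma concat_mul_blockDiagonal {n dv h : ℕ} (B : Fin h → Matrix (Fin n) (Fin dv) ℝ)
    (D : Fin h → Matrix (Fin dv) (Fin dv) ℝ) :
    concat B * Matrix.blockDiagonal D = concat (fun l => B l * D l) := by
  ext i ⟨j, l⟩
  simp [concat, mul_apply, blockDiagonal_apply, Fintype.sum_prod_type]

/-- **Multi-head concatenation invariance.** Permuting each head output by `P₂` is undone by
the block-diagonal matrix `P₃` with diagonal blocks `P₂ᵀ`; consequently the output projection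
is unchanged. -/
theorem concat_permutation_invariance {n dv dm h : ℕ}
    (hn : 0 < n) (hdv : 0 < dv) (hdm : 0 < dm) (hh : 0 < h)
    (A : Fin h → Matrix (Fin n) (Fin dv) ℝ) (τ : Equiv.Perm (Fin dv)) :
    concat (fun l => A l * τ.permMatrix ℝ) *
        Matrix.blockDiagonal (fun _ : Fin h => (τ.permMatrix ℝ)ᵀ) = concat A ∧
    ∀ W : Matrix (Fin dv × Fin h) (Fin dm) ℝ,
      concat (fun l => A l * τ.permMatrix ℝ) *
          Matrix.blockDiagonal (fun _ : Fin h => (τ.permMatrix ℝ)ᵀ) * W = concat A * W := by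
  have key : concat (fun l => A l * τ.permMatrix ℝ) *
      Matrix.blockDiagonal (fun _ : Fin h => (τ.permMatrix ℝ)ᵀ) = concat A := by
    rw [concat_mul_blockDiagonal]
    simp only [Matrix.mul_assoc, permMatrix_mul_transpose, Matrix.mul_one]
  exact ⟨key, fun W => by rw [key]⟩
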